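/- Let A be a small category and A_⊙ the category obtained by freely adjoining a terminal object ⊙. Then the assignment sending an object X of A to the unique morphism X → ⊙, and an object (X → Y) of D(A) to itself viewed in D(A_⊙), defines a fully faithful functor from the tautological category T(A) := A ⊔ D(A) into D(A_⊙) which is injective on objects and whose image consists of all objects of D(A_⊙) except ⊙ → ⊙, and which commutes with the fiber functors (is an operadic functor). -/

import Mathlib

open CategoryTheory

universe u

abbrev DCat (B : Type u) [SmallCategory B] : Type u := Σ c : B, Over c

def fibD {B : Type u} [SmallCategory B] :
    ∀ {x y : DCat B}, (x ⟶ y) → DCat B :=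
  fun {x y} σ =>
    match x, y, σ with
    | ⟨_, _⟩, ⟨_, g⟩, Sigma.SigmaHom.mk φ => ⟨g.left, Over.mk φ.left⟩

def fibT {A : Type u} [SmallCategory A] :
    ∀ {x y : A ⊕ DCat A}, (x ⟶ y) → (A ⊕ DCat A) :=
  fun {x y} σ =>
    match x, y, σ with
    | Sum.inl _, Sum.inl Y, g => Sum.inr ⟨Y, Over.mk g.down⟩
    | Sum.inr _, Sum.inr _, σ => Sum.inr (fibD σ.down)
    | Sum.inl _, Sum.inr _, σ => PEmpty.elim σ
    | Sum.inr _, Sum.inl _, σ => PEmpty.elim σ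

namespace TautEmbed

variable {A : Type u} [SmallCategory A]

def Jobj : A ⊕ DCat A → DCat (WithTerminal A)
  | Sum.inl X => ⟨WithTerminal.star, Over.mk (WithTerminal.homFrom X)⟩
  | Sum.inr p => ⟨WithTerminal.of p.1, (Over.post WithTerminal.incl).obj p.2⟩

def Jmap : ∀ {x y : A ⊕ DCat A}, (x ⟶ y) → (Jobj x ⟶ Jobj y)
  | Sum.inl _, Sum.inl _, g =>
      Sigma.SigmaHom.mk (Over.homMk (WithTerminal.incl.map g.down) rfl)
  | Sum.inr ⟨_, _⟩, Sum.inr ⟨_, _⟩, ⟨Sigma.SigmaHom.mk φ⟩ =>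
      Sigma.SigmaHom.mk ((Over.post WithTerminal.incl).map φ)
  | Sum.inl _, Sum.inr _, σ => PEmpty.elim σ
  | Sum.inr _, Sum.inl _, σ => PEmpty.elim σ

def J : (A ⊕ DCat A) ⥤ DCat (WithTerminal A) where
  obj := Jobj
  map := Jmap
  map_id x := by
    match x with
    | Sum.inl X =>
        exact congrArg Sigma.SigmaHom.mk (by ext; rfl)
    | Sum.inr ⟨c, f⟩ =>
        exact congrArg Sigma.SigmaHom.mk ((Over.post WithTerminal.incl).map_id f)
  map_comp {x y z} f g := by
    match x, y, z, f, g with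
    | Sum.inl X, Sum.inl Y, Sum.inl Z, f, g =>
        exact congrArg Sigma.SigmaHom.mk (by ext; rfl)
    | Sum.inr ⟨c, a⟩, Sum.inr ⟨_, b⟩, Sum.inr ⟨_, d⟩,
        ⟨Sigma.SigmaHom.mk φ⟩, ⟨Sigma.SigmaHom.mk ψ⟩ =>
        exact congrArg Sigma.SigmaHom.mk ((Over.post WithTerminal.incl).map_comp φ ψ)


theorem J_full : (J : (A ⊕ DCat A) ⥤ _).Full where
  map_surjective {x y} φ := by
    match x, y with
    | Sum.inl X, Sum.inl Y =>
        match φ with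
        | Sigma.SigmaHom.mk ψ =>
          exact ⟨⟨ψ.left⟩, congrArg Sigma.SigmaHom.mk (by ext; rfl)⟩
    | Sum.inl X, Sum.inr ⟨c, f⟩ => exact (by rcases φ with ⟨⟩)
    | Sum.inr ⟨c, f⟩, Sum.inl X => exact (by rcases φ with ⟨⟩)
    | Sum.inr ⟨c, a⟩, Sum.inr ⟨c', b⟩ =>
        rcases φ with ⟨ψ⟩
        refine ⟨⟨Sigma.SigmaHom.mk (Over.homMk ψ.left (Over.w ψ))⟩, ?_⟩
        exact congrArg Sigma.SigmaHom.mk (by ext; rfl)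

theorem J_faithful : (J : (A ⊕ DCat A) ⥤ _).Faithful where
  map_injective {x y} {f g} h := by
    match x, y, f, g with
    | Sum.inl X, Sum.inl Y, f, g =>
        have := congrArg (fun (σ : Jobj (Sum.inl X) ⟶ Jobj (Sum.inl Y)) =>
          match σ with | Sigma.SigmaHom.mk ψ => ψ.left) h
        exact congrArg ULift.up this
    | Sum.inr ⟨c, a⟩, Sum.inr ⟨_, b⟩, ⟨Sigma.SigmaHom.mk φ⟩, ⟨Sigma.SigmaHom.mk ψ⟩ =>
        have := congrArg (fun (σ : Jobj (Sum.inr ⟨c,a⟩) ⟶ Jobj (Sum.inr ⟨c,b⟩)) =>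
          match σ with | Sigma.SigmaHom.mk ψ => ψ.left) h
        exact congrArg ULift.up (congrArg Sigma.SigmaHom.mk (by ext; exact this))

theorem post_incl_obj_inj {c : A} :
    Function.Injective fun (f : Over c) => (Over.post (WithTerminal.incl)).obj f := by
  rintro ⟨al, ⟨⟨⟩⟩, ah⟩ ⟨bl, ⟨⟨⟩⟩, bh⟩ h
  injection h with h1 h2 h3
  obtain rfl : al = bl := by
    injection (show WithTerminal.of al = WithTerminal.of bl from h1)
  cases eq_of_heq h3
  rfl

theorem Jobj_inj : Function.Injective (Jobj (A := A)) := by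
  rintro (X | ⟨c, a⟩) (Y | ⟨c', b⟩) h
  · have h2 : (Over.mk (WithTerminal.homFrom X)).left
        = (Over.mk (WithTerminal.homFrom Y)).left :=
      congrArg Comma.left (eq_of_heq (_root_.Sigma.ext_iff.mp h).2)
    obtain rfl : X = Y := by
      injection (show WithTerminal.of X = WithTerminal.of Y from h2)
    rfl
  · exact absurd (congrArg Sigma.fst h) (by simp [Jobj])
  · exact absurd (congrArg Sigma.fst h) (by simp [Jobj])
  · obtain ⟨h1, h2⟩ := _root_.Sigma.ext_iff.mp h
    have hc : c = c' := by injection h1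
    subst hc
    obtain rfl := post_incl_obj_inj (eq_of_heq h2)
    rfl

theorem Jobj_range : Set.range (Jobj (A := A)) =
    {x : DCat (WithTerminal A) |
      x ≠ ⟨WithTerminal.star, Over.mk (𝟙 (WithTerminal.star : WithTerminal A))⟩} := by
  ext x
  constructor
  · rintro ⟨(X | ⟨c, a⟩), rfl⟩ h
    · have h2 := (_root_.Sigma.ext_iff.mp h).2
      have h3 : (Over.mk (WithTerminal.homFrom X)).left
          = (Over.mk (𝟙 (WithTerminal.star : WithTerminal A))).left :=
        congrArg Comma.left (eq_of_heq h2)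
      exact absurd h3 (by simp [WithTerminal.incl])
    · exact absurd (congrArg Sigma.fst h) (by simp [Jobj])
  · rintro h
    obtain ⟨t, fl, ⟨⟨⟩⟩, fh⟩ := x
    cases t with
    | of c =>
      cases fl with
      | of X => exact ⟨Sum.inr ⟨c, Over.mk (WithTerminal.down fh)⟩, rfl⟩
      | star => exact (fh : PEmpty).elim
    | star =>
      cases fl with
      | of X => rcases fh with ⟨⟩; exact ⟨Sum.inl X, rfl⟩
      | star => rcases fh with ⟨⟩; exact absurd rfl h

theorem J_fib : ∀ {x y : A ⊕ DCat A} (σ : x ⟶ y),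
    (J : (A ⊕ DCat A) ⥤ _).obj (fibT σ) = fibD ((J : (A ⊕ DCat A) ⥤ _).map σ) := by
  intro x y σ
  match x, y, σ with
  | Sum.inl X, Sum.inl Y, g => rfl
  | Sum.inr ⟨c, a⟩, Sum.inr ⟨_, b⟩, ⟨Sigma.SigmaHom.mk φ⟩ => rfl
  | Sum.inl _, Sum.inr _, σ => exact σ.elim
  | Sum.inr _, Sum.inl _, σ => exact σ.elim

end TautEmbed

theorem tautological_embeds_into_decollage_of_withTerminal
    (A : Type u) [SmallCategory A] :
    ∃ J : (A ⊕ DCat A) ⥤ DCat (WithTerminal A),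
      (∀ X : A,
        J.obj (Sum.inl X) =
          ⟨WithTerminal.star, Over.mk (WithTerminal.homFrom X)⟩) ∧
      (∀ p : DCat A,
        J.obj (Sum.inr p) =
          ⟨WithTerminal.of p.1, (Over.post WithTerminal.incl).obj p.2⟩) ∧
      J.Full ∧ J.Faithful ∧ Function.Injective J.obj ∧
      (Set.range J.obj =
        {x : DCat (WithTerminal A) |
          x ≠ ⟨WithTerminal.star,
                Over.mk (𝟙 (WithTerminal.star : WithTerminal A))⟩}) ∧
      (∀ {x y : A ⊕ DCat A} (σ : x ⟶ y),
        J.obj (fibT σ) = fibD (J.map σ)) :=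
  ⟨TautEmbed.J, fun _ => rfl, fun _ => rfl, TautEmbed.J_full, TautEmbed.J_faithful,
    TautEmbed.Jobj_inj, TautEmbed.Jobj_range, TautEmbed.J_fib⟩
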